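/- For every k, l ≥ 1 and d ≥ 2, every real-valued array (matrix) of size (k+l-1) × ((d-1)^C(k+l, k) + 1) contains either a subarray of size k × d whose columns form an increasing sequence of vectors in R^k, or a subarray of size l × d whose columns form a decreasing sequence of vectors in R^l. -/

import Mathlib

section Abstract

variable {N : ℕ} {ι : Type} [Fintype ι]

/-- A chain of length `m+1` of columns ending at `j`, with all consecutive
pairs related by the relation of color `t`. -/
def ChainEnd (R : ι → Fin N → Fin N → Prop) (t : ι) (j : Fin N) (m : ℕ) : Prop :=
  ∃ c : Fin (m + 1) → Fin N, StrictMono c ∧ c ⟨m, by omega⟩ = j ∧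
    ∀ i : ℕ, ∀ _ : i < m, R t (c ⟨i, by omega⟩) (c ⟨i + 1, by omega⟩)

lemma chainEnd_zero (R : ι → Fin N → Fin N → Prop) (t : ι) (j : Fin N) :
    ChainEnd R t j 0 := by
  refine ⟨fun _ => j, ?_, rfl, fun i hi => by omega⟩
  intro a b hab
  exact absurd hab (by omega)

lemma chainEnd_card {R : ι → Fin N → Fin N → Prop} {t : ι} {j : Fin N} {m : ℕ}
    (h : ChainEnd R t j m) : m + 1 ≤ N := by
  obtain ⟨c, hc, -, -⟩ := h
  have := Fintype.card_le_of_injective c hc.injective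
  simpa using this

lemma chainEnd_mono {R : ι → Fin N → Fin N → Prop} {t : ι} {j : Fin N} {m m' : ℕ}
    (h : ChainEnd R t j m) (hm : m' ≤ m) : ChainEnd R t j m' := by
  obtain ⟨c, hc, hlast, hstep⟩ := h
  refine ⟨fun i => c ⟨i.1 + (m - m'), by omega⟩, ?_, ?_, ?_⟩
  · intro a b hab
    apply hc
    simp only [Fin.lt_def] at hab ⊢
    omega
  · have e : (⟨m' + (m - m'), by omega⟩ : Fin (m + 1)) = ⟨m, by omega⟩ :=
      Fin.ext (by simp; omega)
    simpa [e] using hlast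
  · intro i hi
    have h1 := hstep (i + (m - m')) (by omega)
    have e : (⟨i + (m - m') + 1, by omega⟩ : Fin (m + 1))
        = (⟨i + 1 + (m - m'), by omega⟩ : Fin (m + 1)) := Fin.ext (by simp; omega)
    rwa [e] at h1

lemma chainEnd_extend {R : ι → Fin N → Fin N → Prop} {t : ι} {j j' : Fin N} {m : ℕ}
    (h : ChainEnd R t j m) (hjj : j < j') (hR : R t j j') :
    ChainEnd R t j' (m + 1) := by
  obtain ⟨c, hc, hlast, hstep⟩ := h
  refine ⟨fun i => if hi : i.1 < m + 1 then c ⟨i.1, hi⟩ else j', ?_, ?_, ?_⟩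
  · intro a b hab
    simp only [Fin.lt_def] at hab
    by_cases hb : b.1 < m + 1
    · have ha : a.1 < m + 1 := by omega
      simp only [dif_pos ha, dif_pos hb]
      exact hc (show _ < _ from hab)
    · have hb' : b.1 = m + 1 := by omega
      by_cases ha : a.1 < m + 1
      · simp only [dif_pos ha, dif_neg hb]
        have : c ⟨a.1, ha⟩ ≤ c ⟨m, by omega⟩ := hc.monotone (Fin.mk_le_mk.mpr (by omega))
        rw [hlast] at this
        exact lt_of_le_of_lt this hjj
      · omega
  · simp
  · intro i hi
    by_cases h2 : i < m
    · have e1 : i < m + 1 := by omega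
      have e2 : i + 1 < m + 1 := by omega
      simp only [dif_pos e1, dif_pos e2]
      exact hstep i h2
    · have h3 : m = i := by omega
      subst h3
      have e1 : m < m + 1 := by omega
      simp only [dif_pos e1, dif_neg (lt_irrefl (m + 1))]
      rwa [hlast]

/-- Multicolor Erdős–Szekeres: if every pair of elements of `Fin N` is related by
some color, and `N > e ^ (number of colors)`, then some color has a chain of
length `e + 1`. -/
theorem exists_long_chain {e : ℕ} (R : ι → Fin N → Fin N → Prop)
    (hcov : ∀ x y : Fin N, x < y → ∃ t, R t x y)
    (hN : e ^ Fintype.card ι < N) (he : 1 ≤ e) :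
    ∃ t j, ChainEnd R t j e := by
  classical
  by_contra hcon
  push_neg at hcon
  set L : ι → Fin N → ℕ := fun t j => Nat.findGreatest (ChainEnd R t j) N with hL
  have hLspec : ∀ t j, ChainEnd R t j (L t j) := fun t j =>
    Nat.findGreatest_spec (Nat.zero_le N) (chainEnd_zero R t j)
  have hLlt : ∀ t j, L t j < e := by
    intro t j
    by_contra hge
    exact hcon t j (chainEnd_mono (hLspec t j) (by omega))
  have hmono : ∀ t (j j' : Fin N), j < j' → R t j j' → L t j < L t j' := by
    intro t j j' hjj hR
    have h1 : ChainEnd R t j' (L t j + 1) := chainEnd_extend (hLspec t j) hjj hR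
    have h2 := chainEnd_card h1
    exact Nat.le_findGreatest (by omega) h1
  set φ : Fin N → (ι → Fin e) := fun j t => ⟨L t j, hLlt t j⟩ with hφ
  have hcard : Fintype.card (ι → Fin e) < Fintype.card (Fin N) := by
    simp only [Fintype.card_fun, Fintype.card_fin]
    exact hN
  obtain ⟨a, b, hab, heq⟩ := Fintype.exists_ne_map_eq_of_card_lt φ hcard
  rcases hab.lt_or_gt with hlt | hlt
  · obtain ⟨t, hR⟩ := hcov a b hlt
    have := hmono t a b hlt hR
    have : L t a = L t b := congrArg Fin.val (congrFun heq t)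
    omega
  · obtain ⟨t, hR⟩ := hcov b a hlt
    have := hmono t b a hlt hR
    have : L t b = L t a := congrArg Fin.val (congrFun heq t).symm
    omega

end Abstract

/-- The coloring relation: color `inl S` means the columns increase on all rows
of `S`; color `inr S` means they decrease on all rows of `S`. -/
def ArrRel {m N : ℕ} (A : Fin m → Fin N → ℝ) (k l : ℕ)
    (t : {S : Finset (Fin m) // S.card = k} ⊕ {S : Finset (Fin m) // S.card = l})
    (x y : Fin N) : Prop :=
  match t with
  | .inl S => ∀ i ∈ S.1, A i x ≤ A i y
  | .inr S => ∀ i ∈ S.1, A i y ≤ A i x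

/-- Theorem 3: every real array of size (k+l-1) × ((d-1)^C(k+l,k) + 1) has
property (k, l, d): it contains a k × d subarray whose columns form an
increasing sequence of vectors in ℝ^k, or an l × d subarray whose columns
form a decreasing sequence of vectors in ℝ^l. -/
theorem property_kld (k l d : ℕ) (hk : 1 ≤ k) (hl : 1 ≤ l) (hd : 2 ≤ d)
    (A : Fin (k + l - 1) → Fin ((d - 1) ^ ((k + l).choose k) + 1) → ℝ) :
    (∃ r : Fin k → Fin (k + l - 1),
      ∃ c : Fin d → Fin ((d - 1) ^ ((k + l).choose k) + 1),
        StrictMono r ∧ StrictMono c ∧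
        ∀ j j' : Fin d, j ≤ j' → ∀ i : Fin k, A (r i) (c j) ≤ A (r i) (c j')) ∨
    (∃ r : Fin l → Fin (k + l - 1),
      ∃ c : Fin d → Fin ((d - 1) ^ ((k + l).choose k) + 1),
        StrictMono r ∧ StrictMono c ∧
        ∀ j j' : Fin d, j ≤ j' → ∀ i : Fin l, A (r i) (c j') ≤ A (r i) (c j)) := by
  classical
  -- coverage
  have hcov : ∀ x y : Fin ((d - 1) ^ ((k + l).choose k) + 1), x < y →
      ∃ t, ArrRel A k l t x y := by
    intro x y hxy
    set I : Finset (Fin (k + l - 1)) := Finset.univ.filter (fun i => A i x ≤ A i y) with hI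
    by_cases hcard : k ≤ I.card
    · obtain ⟨S, hSsub, hScard⟩ := Finset.exists_subset_card_eq hcard
      refine ⟨.inl ⟨S, hScard⟩, ?_⟩
      intro i hi
      have := hSsub hi
      simp [hI] at this
      exact this
    · have hcompl : l ≤ Iᶜ.card := by
        have h1 : Iᶜ.card = Fintype.card (Fin (k + l - 1)) - I.card := Finset.card_compl I
        have h2 : Fintype.card (Fin (k + l - 1)) = k + l - 1 := Fintype.card_fin _
        omega
      obtain ⟨S, hSsub, hScard⟩ := Finset.exists_subset_card_eq hcompl
      refine ⟨.inr ⟨S, hScard⟩, ?_⟩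
      intro i hi
      have := hSsub hi
      simp [hI, Finset.mem_compl] at this
      exact le_of_lt this
  -- cardinality of colors
  have hcardι : Fintype.card
      ({S : Finset (Fin (k + l - 1)) // S.card = k} ⊕
        {S : Finset (Fin (k + l - 1)) // S.card = l}) = (k + l).choose k := by
    obtain ⟨k', rfl⟩ : ∃ k', k = k' + 1 := ⟨k - 1, by omega⟩
    simp only [Fintype.card_sum, Fintype.card_finset_len, Fintype.card_fin]
    have hm' : k' + 1 + l - 1 = k' + l := by omega
    rw [hm']
    have h1 : (k' + l).choose l = (k' + l).choose k' := by
      have := Nat.choose_symm (show l ≤ k' + l by omega)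
      simpa [show k' + l - l = k' by omega] using this.symm
    have h2 : (k' + 1 + l).choose (k' + 1) = (k' + l + 1).choose (k' + 1) := by
      congr 1
      omega
    rw [h1, h2, Nat.choose_succ_succ]
    simp only [Nat.succ_eq_add_one]
    omega
  have hN' : (d - 1) ^ Fintype.card
      ({S : Finset (Fin (k + l - 1)) // S.card = k} ⊕
        {S : Finset (Fin (k + l - 1)) // S.card = l})
      < (d - 1) ^ ((k + l).choose k) + 1 := by rw [hcardι]; omega
  obtain ⟨t, j, c, hc, -, hstep⟩ := exists_long_chain (ArrRel A k l) hcov hN' (by omega)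
  -- monotonicity along the chain
  have key : ∀ (w : Fin (k + l - 1))
      (P : Fin ((d - 1) ^ ((k + l).choose k) + 1) →
        Fin ((d - 1) ^ ((k + l).choose k) + 1) → Prop),
      (∀ i : ℕ, ∀ _ : i < d - 1, P (c ⟨i, by omega⟩) (c ⟨i + 1, by omega⟩)) →
      (∀ x, P x x) → (∀ x y z, P x y → P y z → P x z) →
      ∀ b, ∀ _ : b ≤ d - 1, ∀ a, ∀ _ : a ≤ b,
        P (c ⟨a, by omega⟩) (c ⟨b, by omega⟩) := by
    intro w P hPstep hPrefl hPtrans b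
    induction b with
    | zero =>
      intro _ a ha
      have : a = 0 := by omega
      subst this
      exact hPrefl _
    | succ b ih =>
      intro hb a ha
      rcases Nat.lt_or_ge a (b + 1) with h | h
      · exact hPtrans _ _ _ (ih (by omega) a (by omega)) (hPstep b (by omega))
      · have : a = b + 1 := by omega
        subst this
        exact hPrefl _
  have hc'mono : StrictMono (fun i : Fin d =>
      c ⟨i.1, by omega⟩) := by
    intro a b hab
    exact hc (Fin.lt_def.mp hab)
  rcases t with S | S
  · left
    refine ⟨fun i => ((S.1.orderIsoOfFin S.2) i : Fin (k + l - 1)),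
      fun i : Fin d => c ⟨i.1, by omega⟩, ?_, hc'mono, ?_⟩
    · intro a b hab
      exact Subtype.coe_lt_coe.2 ((S.1.orderIsoOfFin S.2).strictMono hab)
    · intro j1 j2 hj12 i
      have hw : ((S.1.orderIsoOfFin S.2) i : Fin (k + l - 1)) ∈ S.1 :=
        ((S.1.orderIsoOfFin S.2) i).2
      have := key ((S.1.orderIsoOfFin S.2) i : Fin (k + l - 1))
        (fun x y => A ((S.1.orderIsoOfFin S.2) i : Fin (k + l - 1)) x ≤
          A ((S.1.orderIsoOfFin S.2) i : Fin (k + l - 1)) y)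
        (fun i' hi' => hstep i' hi' _ hw) (fun x => le_refl _)
        (fun x y z h1 h2 => le_trans h1 h2) j2.1 (by omega) j1.1 hj12
      exact this
  · right
    refine ⟨fun i => ((S.1.orderIsoOfFin S.2) i : Fin (k + l - 1)),
      fun i : Fin d => c ⟨i.1, by omega⟩, ?_, hc'mono, ?_⟩
    · intro a b hab
      exact Subtype.coe_lt_coe.2 ((S.1.orderIsoOfFin S.2).strictMono hab)
    · intro j1 j2 hj12 i
      have hw : ((S.1.orderIsoOfFin S.2) i : Fin (k + l - 1)) ∈ S.1 :=
        ((S.1.orderIsoOfFin S.2) i).2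
      have := key ((S.1.orderIsoOfFin S.2) i : Fin (k + l - 1))
        (fun x y => A ((S.1.orderIsoOfFin S.2) i : Fin (k + l - 1)) y ≤
          A ((S.1.orderIsoOfFin S.2) i : Fin (k + l - 1)) x)
        (fun i' hi' => hstep i' hi' _ hw) (fun x => le_refl _)
        (fun x y z h1 h2 => le_trans h2 h1) j2.1 (by omega) j1.1 hj12
      exact this
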